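/- arXiv:1908.01433 — 2 statements merged into one kernel-verified Lean document; each statement's English description precedes it below -/
import Mathlib

section
/- Let n ≥ 2 be an even integer, and let G be the 4-graph on 2n vertices whose vertex set is the disjoint union of sets A and B with |A| = |B| = n, and whose edges are all 4-element vertex sets intersecting A in exactly two vertices. Then for every real p ≥ 2, λ_min^(p)(G) > −4! · 2n^3 / (2n)^{4/p} = −48 n^3 / (2n)^{4/p}. -/
open Finset

/-- Polynomial form of a weighted `r`-graph with edge set `E` and weights `w`:
`P(x) = r! * ∑_{e ∈ E} w(e) * ∏_{i ∈ e} x i`. -/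
noncomputable def polyForm (r : ℕ) {V : Type*} (E : Finset (Finset V))
    (w : Finset V → ℝ) (x : V → ℝ) : ℝ :=
  (r.factorial : ℝ) * ∑ e ∈ E, w e * ∏ i ∈ e, x i

/-- The ℓ^p norm of a vector. -/
noncomputable def lpNorm (p : ℝ) {V : Type*} [Fintype V] (x : V → ℝ) : ℝ :=
  (∑ i, |x i| ^ p) ^ (1 / p)

/-- `λ^(p)(G_w)`: the maximum of the polynomial form over the unit ℓ^p sphere. -/
noncomputable def lamMax (r : ℕ) (p : ℝ) {V : Type*} [Fintype V]
    (E : Finset (Finset V)) (w : Finset V → ℝ) : ℝ :=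
  sSup {t | ∃ x : V → ℝ, lpNorm p x = 1 ∧ polyForm r E w x = t}

/-- `λ_min^(p)(G_w)`: the minimum of the polynomial form over the unit ℓ^p sphere. -/
noncomputable def lamMin (r : ℕ) (p : ℝ) {V : Type*} [Fintype V]
    (E : Finset (Finset V)) (w : Finset V → ℝ) : ℝ :=
  sInf {t | ∃ x : V → ℝ, lpNorm p x = 1 ∧ polyForm r E w x = t}

/-- Edge set of the complete `r`-graph `K_k^r` on vertex set `Fin k`. -/
def completeEdges (r k : ℕ) : Finset (Finset (Fin k)) :=
  Finset.univ.powersetCard r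

/-- The `4`-graph of Section 2 of the paper: the vertex set is the disjoint union
`A ⊕ B` of two sets of size `n` (`A` = left copy of `Fin n`, `B` = right copy), and
the edges are all `4`-element vertex sets intersecting `A` in exactly two vertices. -/
def crossEdges (n : ℕ) : Finset (Finset (Fin n ⊕ Fin n)) :=
  (Finset.univ.powersetCard 4).filter
    (fun e => (e.filter (fun v => v.isLeft = true)).card = 2)

private lemma sq_sum_eq' {ι : Type*} [DecidableEq ι] (s : Finset ι) (a : ι → ℝ) :
    (∑ i ∈ s, a i) ^ 2 = ∑ i ∈ s, a i ^ 2 + 2 * ∑ t ∈ s.powersetCard 2, ∏ i ∈ t, a i := by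
  induction s using Finset.induction_on with
  | empty => rw [Finset.powersetCard_eq_empty.2 (by simp)]; simp
  | @insert x s hx ih =>
    have hdisj : Disjoint (s.powersetCard 2) ((s.powersetCard 1).image (insert x)) := by
      rw [Finset.disjoint_left]
      intro t ht ht'
      obtain ⟨u, hu, rfl⟩ := Finset.mem_image.1 ht'
      have := (Finset.mem_powersetCard.1 ht).1
      exact hx (this (Finset.mem_insert_self x u))
    have hinj : ∀ u ∈ s.powersetCard 1, ∀ v ∈ s.powersetCard 1,
        insert x u = insert x v → u = v := by
      intro u hu v hv h
      have hxu : x ∉ u := fun h' => hx ((Finset.mem_powersetCard.1 hu).1 h')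
      have hxv : x ∉ v := fun h' => hx ((Finset.mem_powersetCard.1 hv).1 h')
      rw [← Finset.erase_insert hxu, ← Finset.erase_insert hxv, h]
    rw [Finset.sum_insert hx, Finset.sum_insert hx, Finset.powersetCard_succ_insert hx,
      Finset.sum_union hdisj, Finset.sum_image hinj]
    have h1 : ∑ t ∈ s.powersetCard 1, ∏ i ∈ insert x t, a i
        = a x * ∑ i ∈ s, a i := by
      rw [Finset.mul_sum, Finset.powersetCard_one, Finset.sum_map]
      refine Finset.sum_congr rfl fun i hi => ?_
      have hxi : x ∉ ({i} : Finset ι) := by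
        simp only [Finset.mem_singleton]; rintro rfl; exact hx hi
      simp [Finset.prod_insert hxi]
    rw [h1]; linear_combination ih

private lemma filter_isLeft_eq {α β : Type*} [DecidableEq α] [DecidableEq β]
    (u : Finset (α ⊕ β)) :
    u.filter (fun v => v.isLeft = true) = u.toLeft.map ⟨Sum.inl, Sum.inl_injective⟩ := by
  ext v; cases v <;> simp

private lemma cross_factor (n : ℕ) (x : Fin n ⊕ Fin n → ℝ) :
    ∑ e ∈ crossEdges n, ∏ i ∈ e, x i =
      (∑ s ∈ (Finset.univ : Finset (Fin n)).powersetCard 2, ∏ i ∈ s, x (Sum.inl i)) *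
      (∑ t ∈ (Finset.univ : Finset (Fin n)).powersetCard 2, ∏ j ∈ t, x (Sum.inr j)) := by
  rw [Finset.sum_mul_sum, ← Finset.sum_product']
  refine Finset.sum_nbij' (fun e => (e.toLeft, e.toRight)) (fun p => p.1.disjSum p.2)
    ?_ ?_ ?_ ?_ ?_
  · intro e he
    simp only [crossEdges, Finset.mem_filter, Finset.mem_powersetCard] at he
    obtain ⟨⟨-, hc⟩, hl⟩ := he
    rw [filter_isLeft_eq, Finset.card_map] at hl
    have hr : e.toRight.card = 2 := by
      have := Finset.card_toLeft_add_card_toRight (u := e)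
      omega
    simp [Finset.mem_product, Finset.mem_powersetCard, hl, hr]
  · intro p hp
    simp only [Finset.mem_product, Finset.mem_powersetCard] at hp
    simp only [crossEdges, Finset.mem_filter, Finset.mem_powersetCard]
    refine ⟨⟨Finset.subset_univ _, ?_⟩, ?_⟩
    · rw [Finset.card_disjSum, hp.1.2, hp.2.2]
    · rw [filter_isLeft_eq, Finset.card_map, Finset.toLeft_disjSum, hp.1.2]
  · intro e _; exact Finset.toLeft_disjSum_toRight (u := e)
  · intro p _; simp
  · intro e _
    conv_lhs => rw [← Finset.toLeft_disjSum_toRight (u := e)]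
    rw [Finset.prod_disjSum]

private lemma holder_bound {V : Type*} [Fintype V] (hV : 0 < Fintype.card V) {p : ℝ}
    (hp : 2 ≤ p) {x : V → ℝ} (hx : ∑ i, |x i| ^ p = 1) :
    ∑ i, x i ^ 2 ≤ (Fintype.card V : ℝ) ^ (1 - 2 / p) := by
  set N : ℝ := (Fintype.card V : ℝ) with hN
  have hN0 : 0 < N := by rw [hN]; exact_mod_cast hV
  have hp0 : 0 < p := by linarith
  have hpow : ∀ i : V, ((x i ^ 2 : ℝ)) ^ (p / 2) = |x i| ^ p := by
    intro i
    rw [← sq_abs, ← Real.rpow_natCast |x i| 2, ← Real.rpow_mul (abs_nonneg _)]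
    rw [Nat.cast_ofNat, mul_div_cancel₀ p two_ne_zero]
  have key := Real.arith_mean_le_rpow_mean Finset.univ (fun _ => 1 / N)
    (fun i => x i ^ 2) (fun i _ => by positivity)
    (by rw [Finset.sum_const, Finset.card_univ, nsmul_eq_mul]; field_simp; exact hN.symm)
    (fun i _ => sq_nonneg _) (by linarith : (1:ℝ) ≤ p / 2)
  rw [← Finset.mul_sum, ← Finset.mul_sum] at key
  simp only [hpow] at key
  rw [hx, mul_one] at key
  rw [show (1:ℝ)/(p/2) = 2/p by rw [one_div, inv_div]] at key
  have h2 : (1 / N : ℝ) ^ (2 / p) = 1 / N ^ (2 / p) := by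
    rw [one_div, Real.inv_rpow hN0.le, one_div]
  have h3 : N ^ (1 - 2 / p) = N / N ^ (2 / p) := by
    rw [Real.rpow_sub hN0, Real.rpow_one]
  rw [h2] at key
  rw [h3]
  have hNp : 0 < N ^ (2 / p) := Real.rpow_pos_of_pos hN0 _
  rw [le_div_iff₀ hNp]
  rw [div_mul_eq_mul_div, div_le_div_iff₀ hN0 hNp] at key
  nlinarith [key]


private lemma box_key {SA SB QA QB u v m : ℝ} (hm : 0 ≤ m)
    (hQA0 : 0 ≤ QA) (hQB0 : 0 ≤ QB)
    (hidA : SA^2 = QA + 2*u) (hidB : SB^2 = QB + 2*v)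
    (hCSA : SA^2 ≤ (m+1)*QA) (hCSB : SB^2 ≤ (m+1)*QB) :
    -(m/16) * (QA+QB)^2 ≤ u*v := by
  have hul : -QA/2 ≤ u := by nlinarith [sq_nonneg SA]
  have huu : u ≤ m*QA/2 := by nlinarith
  have hvl : -QB/2 ≤ v := by nlinarith [sq_nonneg SB]
  have hvu : v ≤ m*QB/2 := by nlinarith
  have huv : -(m/4) * (QA*QB) ≤ u * v := by
    rcases le_or_gt 0 u with hu | hu <;> rcases le_or_gt 0 v with hv | hv
    · nlinarith [mul_nonneg hu hv, mul_nonneg hQA0 hQB0]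
    · nlinarith [mul_le_mul_of_nonpos_right huu hv.le,
        mul_le_mul_of_nonneg_left hvl (by nlinarith : (0:ℝ) ≤ m*QA/2)]
    · nlinarith [mul_le_mul_of_nonpos_right hvu hu.le,
        mul_le_mul_of_nonneg_left hul (by nlinarith : (0:ℝ) ≤ m*QB/2)]
    · nlinarith [mul_pos_of_neg_of_neg hu hv, mul_nonneg hQA0 hQB0]
  nlinarith [sq_nonneg (QA - QB), mul_nonneg hQA0 hQB0]

/-- Lower-bound part of equation (13) of the paper: for even `n ≥ 2` and real
`p ≥ 2`, the `4`-graph `G` of Section 2 satisfies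
`λ_min^(p)(G) > -4!·2n³/(2n)^{4/p} = -48n³/(2n)^{4/p}`. -/
theorem lamMin_crossEdges_gt (n : ℕ) (hn : Even n) (h2 : 2 ≤ n) (p : ℝ) (hp : 2 ≤ p) :
    lamMin 4 p (crossEdges n) (fun _ => 1) >
      -(48 * (n : ℝ) ^ 3 / (2 * (n : ℝ)) ^ ((4 : ℝ) / p)) := by
  have hp0 : (0:ℝ) < p := by linarith
  have hn0 : (0:ℝ) < (n:ℝ) := by exact_mod_cast Nat.lt_of_lt_of_le Nat.zero_lt_two h2
  have hn1 : (1:ℝ) ≤ (n:ℝ) := by exact_mod_cast Nat.one_le_of_lt h2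
  set c : ℝ := (2 * (n:ℝ)) ^ ((4:ℝ)/p) with hcdef
  have hc : 0 < c := Real.rpow_pos_of_pos (by linarith) _
  set S : Set ℝ :=
    {t | ∃ x : Fin n ⊕ Fin n → ℝ, lpNorm p x = 1 ∧
      polyForm 4 (crossEdges n) (fun _ => 1) x = t} with hSdef
  set B : ℝ := -(6 * (n:ℝ)^2 * ((n:ℝ)-1) / c) with hBdef
  -- the vertex set has 2n elements
  have hcard : (Fintype.card (Fin n ⊕ Fin n) : ℝ) = 2 * (n:ℝ) := by
    simp [Fintype.card_sum]; ring
  have hcardpos : 0 < Fintype.card (Fin n ⊕ Fin n) := by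
    simp [Fintype.card_sum]; omega
  -- the set of attained values is nonempty
  have hne : S.Nonempty := by
    set x0 : Fin n ⊕ Fin n → ℝ :=
      fun v => if v = Sum.inl (⟨0, by omega⟩ : Fin n) then 1 else 0 with hx0
    have hnorm : lpNorm p x0 = 1 := by
      unfold lpNorm
      have hsum : ∑ i, |x0 i| ^ p = 1 := by
        rw [Finset.sum_eq_single (Sum.inl (⟨0, by omega⟩ : Fin n))]
        · simp [hx0, Real.one_rpow]
        · intro b _ hb
          simp [hx0, hb, Real.zero_rpow (ne_of_gt hp0)]
        · simp
      rw [hsum, Real.one_rpow]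
    exact ⟨polyForm 4 (crossEdges n) (fun _ => 1) x0, x0, hnorm, rfl⟩
  -- every attained value is at least B
  have hlow : ∀ t ∈ S, B ≤ t := by
    rintro t ⟨x, hx, rfl⟩
    -- the ℓ^p constraint
    have hs0 : 0 ≤ ∑ i, |x i| ^ p :=
      Finset.sum_nonneg fun i _ => Real.rpow_nonneg (abs_nonneg _) _
    have hsum1 : ∑ i, |x i| ^ p = 1 := by
      have h := congrArg (fun y : ℝ => y ^ p) hx
      simp only [lpNorm] at h
      rwa [← Real.rpow_mul hs0, one_div, inv_mul_cancel₀ (ne_of_gt hp0),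
        Real.rpow_one, Real.one_rpow] at h
    set Q : ℝ := ∑ i, x i ^ 2 with hQdef
    have hQle : Q ≤ (2 * (n:ℝ)) ^ (1 - 2/p) := by
      have := holder_bound hcardpos hp hsum1
      rwa [hcard] at this
    have hQ0 : 0 ≤ Q := Finset.sum_nonneg fun i _ => sq_nonneg _
    -- the two elementary symmetric factors
    set u : ℝ := ∑ s ∈ (Finset.univ : Finset (Fin n)).powersetCard 2,
      ∏ i ∈ s, x (Sum.inl i) with hudef
    set v : ℝ := ∑ t ∈ (Finset.univ : Finset (Fin n)).powersetCard 2,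
      ∏ j ∈ t, x (Sum.inr j) with hvdef
    set QA : ℝ := ∑ i : Fin n, x (Sum.inl i) ^ 2 with hQAdef
    set QB : ℝ := ∑ i : Fin n, x (Sum.inr i) ^ 2 with hQBdef
    have hQA0 : 0 ≤ QA := Finset.sum_nonneg fun i _ => sq_nonneg _
    have hQB0 : 0 ≤ QB := Finset.sum_nonneg fun i _ => sq_nonneg _
    have hQsplit : QA + QB = Q := by
      rw [hQdef, Fintype.sum_sum_type]
    have hidA := sq_sum_eq' Finset.univ (fun i : Fin n => x (Sum.inl i))
    have hidB := sq_sum_eq' Finset.univ (fun i : Fin n => x (Sum.inr i))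
    have hCSA : (∑ i : Fin n, x (Sum.inl i)) ^ 2 ≤ (n:ℝ) * QA := by
      have := sq_sum_le_card_mul_sum_sq (s := (Finset.univ : Finset (Fin n)))
        (f := fun i => x (Sum.inl i))
      simpa using this
    have hCSB : (∑ i : Fin n, x (Sum.inr i)) ^ 2 ≤ (n:ℝ) * QB := by
      have := sq_sum_le_card_mul_sum_sq (s := (Finset.univ : Finset (Fin n)))
        (f := fun i => x (Sum.inr i))
      simpa using this
    have hm0 : (0:ℝ) ≤ (n:ℝ) - 1 := by linarith
    have huv2 : -(((n:ℝ)-1)/16) * Q^2 ≤ u * v := by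
      have := box_key hm0 hQA0 hQB0 hidA hidB
        (by rw [show (n:ℝ)-1+1 = (n:ℝ) by ring]; exact hCSA)
        (by rw [show (n:ℝ)-1+1 = (n:ℝ) by ring]; exact hCSB)
      rwa [hQsplit] at this
    -- value of the polynomial form
    have hval : polyForm 4 (crossEdges n) (fun _ => 1) x = 24 * (u * v) := by
      unfold polyForm
      simp only [one_mul]
      rw [cross_factor]
      norm_num [Nat.factorial]
      rfl
    -- bound Q² via the ℓ^p constraint
    have hQ2 : Q^2 ≤ 4 * (n:ℝ)^2 / c := by
      have hM0 : (0:ℝ) ≤ (2 * (n:ℝ)) ^ (1 - 2/p) := (Real.rpow_pos_of_pos (by linarith) _).le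
      have hM2 : ((2 * (n:ℝ)) ^ (1 - 2/p))^2 = 4 * (n:ℝ)^2 / c := by
        rw [← Real.rpow_natCast ((2 * (n:ℝ)) ^ (1 - 2/p)) 2,
          ← Real.rpow_mul (by linarith : (0:ℝ) ≤ 2 * (n:ℝ))]
        rw [show (1 - 2/p) * (2:ℕ) = 2 - (4:ℝ)/p by push_cast; ring]
        rw [Real.rpow_sub (by linarith : (0:ℝ) < 2 * (n:ℝ)), hcdef]
        norm_num [Real.rpow_two]
        ring_nf
      calc Q^2 ≤ ((2 * (n:ℝ)) ^ (1 - 2/p))^2 := by nlinarith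
        _ = 4 * (n:ℝ)^2 / c := hM2
    rw [hval, hBdef]
    have hstep : -(((n:ℝ)-1)/16) * (4 * (n:ℝ)^2 / c) ≤ -(((n:ℝ)-1)/16) * Q^2 :=
      mul_le_mul_of_nonpos_left hQ2 (by linarith : -(((n:ℝ)-1)/16) ≤ 0)
    have heq : 24 * (-(((n:ℝ)-1)/16) * (4 * (n:ℝ)^2 / c)) = -(6 * (n:ℝ)^2 * ((n:ℝ)-1) / c) := by
      ring
    linarith [mul_le_mul_of_nonneg_left (le_trans hstep huv2) (by norm_num : (0:ℝ) ≤ 24)]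
  have hBle : B ≤ lamMin 4 p (crossEdges n) (fun _ => 1) := le_csInf hne hlow
  have hlt : -(48 * (n : ℝ) ^ 3 / c) < B := by
    rw [hBdef, neg_lt_neg_iff, div_lt_div_iff₀ hc hc]
    have h6 : 6 * (n:ℝ)^2 * ((n:ℝ)-1) < 48 * (n:ℝ)^3 := by nlinarith
    nlinarith [mul_lt_mul_of_pos_right h6 hc]
  exact lt_of_lt_of_le hlt hBle
end

section
/- Let n ≥ 2 be an even integer, and let G be the 4-graph on 2n vertices whose vertex set is the disjoint union of sets A and B with |A| = |B| = n, and whose edges are all 4-element vertex sets intersecting A in exactly two vertices. Then G is 2-chromatic, and for every real p ≥ 2, λ^(p)(G) > ((n−1)^2 / (8n)) · |λ_min^(p)(G)|. In particular, the ratio λ^(p)(G)/|λ_min^(p)(G)| of these 2-chromatic 4-graphs grows at least linearly in n and thus cannot be bounded above by any function of the chromatic number and p. -/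
open Finset

/- ### Auxiliary lemmas -/

lemma e2_id {ι : Type*} [DecidableEq ι] (u : Finset ι) (y : ι → ℝ) :
    2 * ∑ s ∈ u.powersetCard 2, ∏ a ∈ s, y a
      = (∑ a ∈ u, y a) ^ 2 - ∑ a ∈ u, (y a) ^ 2 := by
  induction u using Finset.induction_on with
  | empty =>
    rw [show (Finset.powersetCard 2 (∅ : Finset ι)) = ∅ from
      Finset.powersetCard_eq_empty.2 (by simp)]
    simp
  | insert x u hx ih =>
    have h1 : (insert x u).powersetCard 2 =
        u.powersetCard 2 ∪ (u.powersetCard 1).image (insert x) :=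
      Finset.powersetCard_succ_insert hx 1
    have hdisj : Disjoint (u.powersetCard 2) ((u.powersetCard 1).image (insert x)) := by
      rw [Finset.disjoint_left]
      rintro s hs ht
      simp only [Finset.mem_image] at ht
      obtain ⟨t, ht1, rfl⟩ := ht
      exact hx ((Finset.mem_powersetCard.1 hs).1 (Finset.mem_insert_self x t))
    have hinj : Set.InjOn (insert x) ((u.powersetCard 1 : Finset (Finset ι)) : Set (Finset ι)) := by
      intro s hs t ht hst
      have hs' : x ∉ s := fun h => hx ((Finset.mem_powersetCard.1 hs).1 h)
      have ht' : x ∉ t := fun h => hx ((Finset.mem_powersetCard.1 ht).1 h)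
      ext a
      constructor
      · intro ha
        have : a ∈ insert x t := hst ▸ Finset.mem_insert_of_mem ha
        rcases Finset.mem_insert.1 this with rfl | h
        · exact absurd ha hs'
        · exact h
      · intro ha
        have : a ∈ insert x s := hst ▸ Finset.mem_insert_of_mem ha
        rcases Finset.mem_insert.1 this with rfl | h
        · exact absurd ha ht'
        · exact h
    rw [h1, Finset.sum_union hdisj, Finset.sum_image hinj]
    have h2 : ∀ s ∈ u.powersetCard 1, ∏ a ∈ insert x s, y a = y x * ∏ a ∈ s, y a := by
      intro s hs
      exact Finset.prod_insert (fun h => hx ((Finset.mem_powersetCard.1 hs).1 h))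
    rw [Finset.sum_congr rfl h2, ← Finset.mul_sum]
    have h3 : ∑ s ∈ u.powersetCard 1, ∏ a ∈ s, y a = ∑ a ∈ u, y a := by
      rw [Finset.powersetCard_one, Finset.sum_map]
      simp
    rw [h3, Finset.sum_insert hx, Finset.sum_insert hx]
    ring_nf
    ring_nf at ih
    linarith [ih]

lemma filter_isLeft_eq_s15 {n : ℕ} (e : Finset (Fin n ⊕ Fin n)) :
    e.filter (fun v => v.isLeft = true) = e.toLeft.map ⟨Sum.inl, Sum.inl_injective⟩ := by
  ext v
  cases v <;> simp

lemma mem_crossEdges_iff {n : ℕ} (e : Finset (Fin n ⊕ Fin n)) :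
    e ∈ crossEdges n ↔ e.toLeft.card = 2 ∧ e.toRight.card = 2 := by
  rw [crossEdges, Finset.mem_filter, Finset.mem_powersetCard_univ, filter_isLeft_eq_s15,
    Finset.card_map]
  have := Finset.card_toLeft_add_card_toRight (u := e)
  omega

lemma cross_sum (n : ℕ) (x : Fin n ⊕ Fin n → ℝ) :
    ∑ e ∈ crossEdges n, ∏ i ∈ e, x i =
      (∑ s ∈ (Finset.univ : Finset (Fin n)).powersetCard 2, ∏ a ∈ s, x (Sum.inl a)) *
      (∑ t ∈ (Finset.univ : Finset (Fin n)).powersetCard 2, ∏ b ∈ t, x (Sum.inr b)) := by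
  rw [Finset.sum_mul_sum, ← Finset.sum_product']
  refine Finset.sum_nbij' (i := fun e => (e.toLeft, e.toRight))
    (j := fun st => st.1.disjSum st.2) ?_ ?_ ?_ ?_ ?_
  · intro e he
    rw [mem_crossEdges_iff] at he
    simp [Finset.mem_product, Finset.mem_powersetCard_univ, he.1, he.2]
  · intro st hst
    simp only [Finset.mem_product, Finset.mem_powersetCard_univ] at hst
    rw [mem_crossEdges_iff]
    simp [hst.1, hst.2]
  · intro e _; exact Finset.toLeft_disjSum_toRight
  · intro st _; simp
  · intro e he
    conv_lhs => rw [← Finset.toLeft_disjSum_toRight (u := e)]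
    rw [Finset.prod_disjSum]

lemma polyForm_cross (n : ℕ) (x : Fin n ⊕ Fin n → ℝ) :
    polyForm 4 (crossEdges n) (fun _ => 1) x =
      6 * (((∑ a, x (Sum.inl a)) ^ 2 - ∑ a, (x (Sum.inl a)) ^ 2) *
           ((∑ b, x (Sum.inr b)) ^ 2 - ∑ b, (x (Sum.inr b)) ^ 2)) := by
  have hA := e2_id (Finset.univ : Finset (Fin n)) (fun a => x (Sum.inl a))
  have hB := e2_id (Finset.univ : Finset (Fin n)) (fun b => x (Sum.inr b))
  rw [polyForm]
  simp only [one_mul]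
  rw [cross_sum]
  rw [show ((Nat.factorial 4 : ℕ) : ℝ) = 24 by norm_num [Nat.factorial]]
  linear_combination
    (6 * ((∑ b, x (Sum.inr b)) ^ 2 - ∑ b, (x (Sum.inr b)) ^ 2)) * hA +
    (12 * ∑ s ∈ (Finset.univ : Finset (Fin n)).powersetCard 2, ∏ a ∈ s, x (Sum.inl a)) * hB

lemma sphere_sum {V : Type*} [Fintype V] {p : ℝ} (hp : 0 < p) {x : V → ℝ}
    (h : lpNorm p x = 1) : ∑ i, |x i| ^ p = 1 := by
  have h0 : (0:ℝ) ≤ ∑ i, |x i| ^ p :=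
    Finset.sum_nonneg fun i _ => Real.rpow_nonneg (abs_nonneg _) _
  rw [lpNorm] at h
  have := congrArg (· ^ p) h
  rwa [← Real.rpow_mul h0, one_div, inv_mul_cancel₀ hp.ne', Real.rpow_one,
    Real.one_rpow] at this

lemma sum_sq_le_pm {m : ℕ} (hm : 0 < m) {p : ℝ} (hp : 2 ≤ p) (y : Fin m → ℝ) :
    ∑ i, (y i) ^ 2 ≤ (m : ℝ) * ((∑ i, |y i| ^ p) / m) ^ ((2:ℝ)/p) := by
  have hp0 : 0 < p := lt_of_lt_of_le two_pos hp
  have hm0 : (0:ℝ) < m := by exact_mod_cast hm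
  have key := Real.rpow_arith_mean_le_arith_mean_rpow (Finset.univ : Finset (Fin m))
    (fun _ => (m:ℝ)⁻¹) (fun i => (y i) ^ 2)
    (fun i _ => by positivity) (by simp [Finset.card_univ]; field_simp)
    (fun i _ => sq_nonneg _) (by linarith : 1 ≤ p / 2)
  have hz : ∀ i : Fin m, ((y i) ^ 2) ^ (p/2) = |y i| ^ p := by
    intro i
    rw [← sq_abs, ← Real.rpow_natCast |y i| 2, ← Real.rpow_mul (abs_nonneg _)]
    push_cast
    rw [show (2:ℝ) * (p/2) = p by ring]
  have hL : ∑ i, (m:ℝ)⁻¹ * (y i) ^ 2 = (∑ i, (y i) ^ 2) / m := by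
    rw [← Finset.mul_sum]; ring
  have hR : ∑ i, (m:ℝ)⁻¹ * ((y i) ^ 2) ^ (p/2) = (∑ i, |y i| ^ p) / m := by
    rw [← Finset.mul_sum]
    simp only [hz]
    ring
  rw [hL, hR] at key
  have hQ0 : (0:ℝ) ≤ (∑ i, (y i) ^ 2) / m := by positivity
  have h2 := Real.rpow_le_rpow (Real.rpow_nonneg hQ0 _) key (by positivity : (0:ℝ) ≤ 2/p)
  rw [← Real.rpow_mul hQ0] at h2
  rw [show p / 2 * (2 / p) = 1 by field_simp, Real.rpow_one] at h2
  calc ∑ i, (y i) ^ 2 = ((∑ i, (y i) ^ 2) / m) * m := by field_simp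
    _ ≤ ((∑ i, |y i| ^ p) / m) ^ ((2:ℝ)/p) * m := mul_le_mul_of_nonneg_right h2 hm0.le
    _ = (m : ℝ) * ((∑ i, |y i| ^ p) / m) ^ ((2:ℝ)/p) := by ring

set_option maxHeartbeats 1000000 in
lemma poly_lower {n : ℕ} (hn : 2 ≤ n) {p : ℝ} (hp : 2 ≤ p) {x : Fin n ⊕ Fin n → ℝ}
    (hx : lpNorm p x = 1) :
    -(6 * (n:ℝ) ^ 3 * ((1:ℝ)/(2*(n:ℝ))) ^ ((4:ℝ)/p))
      ≤ polyForm 4 (crossEdges n) (fun _ => 1) x := by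
  have hp0 : 0 < p := lt_of_lt_of_le two_pos hp
  have hn0 : (0:ℝ) < n := by exact_mod_cast (by omega : 0 < n)
  have hsum := sphere_sum hp0 hx
  rw [Fintype.sum_sum_type] at hsum
  set α := ∑ a : Fin n, |x (Sum.inl a)| ^ p with hαd
  set β := ∑ b : Fin n, |x (Sum.inr b)| ^ p with hβd
  have hα0 : 0 ≤ α := Finset.sum_nonneg fun i _ => Real.rpow_nonneg (abs_nonneg _) _
  have hβ0 : 0 ≤ β := Finset.sum_nonneg fun i _ => Real.rpow_nonneg (abs_nonneg _) _
  set SA := ∑ a : Fin n, x (Sum.inl a) with hSAd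
  set SB := ∑ b : Fin n, x (Sum.inr b) with hSBd
  set QA := ∑ a : Fin n, (x (Sum.inl a)) ^ 2 with hQAd
  set QB := ∑ b : Fin n, (x (Sum.inr b)) ^ 2 with hQBd
  have hQA0 : 0 ≤ QA := Finset.sum_nonneg fun i _ => sq_nonneg _
  have hQB0 : 0 ≤ QB := Finset.sum_nonneg fun i _ => sq_nonneg _
  set a := (α / n) ^ ((2:ℝ)/p) with had
  set b := (β / n) ^ ((2:ℝ)/p) with hbd
  have ha0 : 0 ≤ a := Real.rpow_nonneg (by positivity) _
  have hb0 : 0 ≤ b := Real.rpow_nonneg (by positivity) _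
  have hQAle : QA ≤ n * a := sum_sq_le_pm (by omega) hp _
  have hQBle : QB ≤ n * b := sum_sq_le_pm (by omega) hp _
  have hSAle : SA ^ 2 ≤ n * QA := by
    have := sq_sum_le_card_mul_sum_sq (s := (Finset.univ : Finset (Fin n)))
      (f := fun a => x (Sum.inl a))
    simpa [Finset.card_univ] using this
  have hSBle : SB ^ 2 ≤ n * QB := by
    have := sq_sum_le_card_mul_sum_sq (s := (Finset.univ : Finset (Fin n)))
      (f := fun b => x (Sum.inr b))
    simpa [Finset.card_univ] using this
  have e1 : SA ^ 2 ≤ n * (n * a) := hSAle.trans (mul_le_mul_of_nonneg_left hQAle hn0.le)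
  have e2 : SB ^ 2 ≤ n * (n * b) := hSBle.trans (mul_le_mul_of_nonneg_left hQBle hn0.le)
  have hprod : -((n:ℝ) ^ 3 * (a * b)) ≤ (SA ^ 2 - QA) * (SB ^ 2 - QB) := by
    have hn3ab : 0 ≤ (n:ℝ) ^ 3 * (a * b) := by positivity
    rcases le_or_gt 0 (SA ^ 2 - QA) with h1 | h1 <;> rcases le_or_gt 0 (SB ^ 2 - QB) with hh2 | hh2
    · linarith [mul_nonneg h1 hh2]
    · have f1 : SA ^ 2 - QA ≤ n * (n * a) := by linarith
      have f2 : -(SB ^ 2 - QB) ≤ n * b := by linarith [sq_nonneg SB]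
      have f3 : (0:ℝ) ≤ -(SB ^ 2 - QB) := by linarith
      have f4 := mul_le_mul f1 f2 f3 (by positivity)
      have h5 : -((SA ^ 2 - QA) * (SB ^ 2 - QB)) ≤ (n:ℝ) ^ 3 * (a * b) := by
        calc -((SA ^ 2 - QA) * (SB ^ 2 - QB)) = (SA ^ 2 - QA) * -(SB ^ 2 - QB) := by ring
          _ ≤ n * (n * a) * (n * b) := f4
          _ = (n:ℝ) ^ 3 * (a * b) := by ring
      linarith
    · have f1 : SB ^ 2 - QB ≤ n * (n * b) := by linarith
      have f2 : -(SA ^ 2 - QA) ≤ n * a := by linarith [sq_nonneg SA]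
      have f3 : (0:ℝ) ≤ -(SA ^ 2 - QA) := by linarith
      have f4 := mul_le_mul f1 f2 f3 (by positivity)
      have h5 : -((SA ^ 2 - QA) * (SB ^ 2 - QB)) ≤ (n:ℝ) ^ 3 * (a * b) := by
        calc -((SA ^ 2 - QA) * (SB ^ 2 - QB)) = (SB ^ 2 - QB) * -(SA ^ 2 - QA) := by ring
          _ ≤ n * (n * b) * (n * a) := f4
          _ = (n:ℝ) ^ 3 * (a * b) := by ring
      linarith
    · have h6 := mul_pos (neg_pos.2 h1) (neg_pos.2 hh2)
      have h5 : (0:ℝ) < (SA ^ 2 - QA) * (SB ^ 2 - QB) := by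
        calc (0:ℝ) < -(SA ^ 2 - QA) * -(SB ^ 2 - QB) := h6
          _ = (SA ^ 2 - QA) * (SB ^ 2 - QB) := by ring
      linarith
  have hab : a * b ≤ ((1:ℝ)/(2*(n:ℝ))) ^ ((4:ℝ)/p) := by
    have g1 : a * b = (α * β / ((n:ℝ) ^ 2)) ^ ((2:ℝ)/p) := by
      rw [had, hbd, ← Real.mul_rpow (by positivity) (by positivity),
        show α/(n:ℝ) * (β/(n:ℝ)) = α*β/((n:ℝ)^2) by rw [div_mul_div_comm, ← sq]]
    have g2 : α * β / ((n:ℝ) ^ 2) ≤ 1 / (4 * (n:ℝ) ^ 2) := by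
      have gq : α * β ≤ 1/4 := by nlinarith [sq_nonneg (α - β)]
      rw [div_le_div_iff₀ (by positivity) (by positivity)]
      have := mul_le_mul_of_nonneg_right gq (by positivity : (0:ℝ) ≤ 4 * (n:ℝ) ^ 2)
      calc α * β * (4 * (n:ℝ) ^ 2) ≤ 1/4 * (4 * (n:ℝ) ^ 2) := this
        _ = 1 * (n:ℝ) ^ 2 := by ring
    have g3 : (α * β / ((n:ℝ) ^ 2)) ^ ((2:ℝ)/p) ≤ ((1:ℝ)/(4*(n:ℝ)^2)) ^ ((2:ℝ)/p) :=
      Real.rpow_le_rpow (by positivity) g2 (by positivity)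
    have g4 : ((1:ℝ)/(4*(n:ℝ)^2)) ^ ((2:ℝ)/p) = ((1:ℝ)/(2*(n:ℝ))) ^ ((4:ℝ)/p) := by
      rw [show (1:ℝ)/(4*(n:ℝ)^2) = ((1:ℝ)/(2*(n:ℝ))) ^ (2:ℕ) by field_simp; ring,
        ← Real.rpow_natCast ((1:ℝ)/(2*(n:ℝ))) 2, ← Real.rpow_mul (by positivity)]
      push_cast
      rw [show (2:ℝ) * (2/p) = 4/p by ring]
    rw [g1, ← g4]
    exact g3
  rw [polyForm_cross]
  have hfin : -((n:ℝ) ^ 3 * ((1:ℝ)/(2*(n:ℝ))) ^ ((4:ℝ)/p)) ≤ (SA ^ 2 - QA) * (SB ^ 2 - QB) := by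
    have := mul_le_mul_of_nonneg_left hab (by positivity : (0:ℝ) ≤ (n:ℝ) ^ 3)
    linarith
  linarith

lemma poly_max {n : ℕ} (hn : 2 ≤ n) {p : ℝ} (hp : 2 ≤ p) :
    ∃ x : Fin n ⊕ Fin n → ℝ, lpNorm p x = 1 ∧
      polyForm 4 (crossEdges n) (fun _ => 1) x
        = 6 * (n:ℝ) ^ 2 * ((n:ℝ) - 1) ^ 2 * ((1:ℝ)/(2*(n:ℝ))) ^ ((4:ℝ)/p) := by
  have hp0 : 0 < p := lt_of_lt_of_le two_pos hp
  have hn0 : (0:ℝ) < n := by exact_mod_cast (by omega : 0 < n)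
  set c := ((1:ℝ)/(2*(n:ℝ))) ^ ((1:ℝ)/p) with hcd
  have hc0 : 0 < c := Real.rpow_pos_of_pos (by positivity) _
  have hcp : c ^ p = 1/(2*(n:ℝ)) := by
    rw [hcd, ← Real.rpow_mul (by positivity), show (1:ℝ)/p*p = 1 by field_simp, Real.rpow_one]
  refine ⟨fun _ => c, ?_, ?_⟩
  · rw [lpNorm]
    have hs : ∑ _i : Fin n ⊕ Fin n, |c| ^ p = 1 := by
      rw [Finset.sum_const, Finset.card_univ, abs_of_pos hc0, hcp]
      simp only [Fintype.card_sum, Fintype.card_fin, nsmul_eq_mul]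
      push_cast
      field_simp
      ring
    rw [hs, Real.one_rpow]
  · rw [polyForm_cross]
    simp only [Finset.sum_const, Finset.card_univ, Fintype.card_fin, nsmul_eq_mul]
    have hc4 : c ^ (4:ℕ) = ((1:ℝ)/(2*(n:ℝ))) ^ ((4:ℝ)/p) := by
      rw [hcd, ← Real.rpow_natCast (((1:ℝ)/(2*(n:ℝ))) ^ ((1:ℝ)/p)) 4,
        ← Real.rpow_mul (by positivity)]
      push_cast
      rw [show (1/p) * (4:ℝ) = 4/p by ring]
    rw [← hc4]
    ring

lemma poly_zero {n : ℕ} (hn : 2 ≤ n) {p : ℝ} (hp : 2 ≤ p) :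
    ∃ x : Fin n ⊕ Fin n → ℝ, lpNorm p x = 1 ∧
      polyForm 4 (crossEdges n) (fun _ => 1) x = 0 := by
  have hp0 : 0 < p := lt_of_lt_of_le two_pos hp
  set v0 : Fin n ⊕ Fin n := Sum.inl ⟨0, by omega⟩ with hv0
  refine ⟨fun v => if v = v0 then 1 else 0, ?_, ?_⟩
  · rw [lpNorm]
    have hs : ∑ i : Fin n ⊕ Fin n, |if i = v0 then (1:ℝ) else 0| ^ p = 1 := by
      rw [Finset.sum_eq_single v0]
      · simp
      · intro i _ hne
        simp [hne, Real.zero_rpow hp0.ne']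
      · intro h
        exact absurd (Finset.mem_univ v0) h
    rw [hs, Real.one_rpow]
  · rw [polyForm]
    have hz : ∀ e ∈ crossEdges n,
        (fun _ => (1:ℝ)) e * ∏ i ∈ e, (if i = v0 then (1:ℝ) else 0) = 0 := by
      intro e he
      rw [mem_crossEdges_iff] at he
      obtain ⟨b, hb⟩ := Finset.card_pos.1 (by omega : 0 < e.toRight.card)
      have hbe : Sum.inr b ∈ e := Finset.mem_toRight.1 hb
      rw [one_mul]
      refine Finset.prod_eq_zero hbe ?_
      simp [hv0]
    rw [Finset.sum_congr rfl hz]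
    simp

lemma poly_bound {n : ℕ} {p : ℝ} (hp : 2 ≤ p) {x : Fin n ⊕ Fin n → ℝ}
    (hx : lpNorm p x = 1) :
    |polyForm 4 (crossEdges n) (fun _ => 1) x| ≤ 24 * ((crossEdges n).card : ℝ) := by
  have hp0 : 0 < p := lt_of_lt_of_le two_pos hp
  have hsum := sphere_sum hp0 hx
  have habs : ∀ i, |x i| ≤ 1 := by
    intro i
    by_contra h
    push_neg at h
    have h1 : (1:ℝ) < |x i| ^ p := by
      calc (1:ℝ) = 1 ^ p := (Real.one_rpow p).symm
        _ < |x i| ^ p := Real.rpow_lt_rpow (by norm_num) h hp0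
    have h2 : |x i| ^ p ≤ 1 := by
      rw [← hsum]
      exact Finset.single_le_sum (f := fun i => |x i| ^ p)
        (fun j _ => Real.rpow_nonneg (abs_nonneg _) _) (Finset.mem_univ i)
    linarith
  rw [polyForm, show ((Nat.factorial 4 : ℕ) : ℝ) = 24 by norm_num [Nat.factorial], abs_mul,
    abs_of_nonneg (by norm_num : (0:ℝ) ≤ 24)]
  have hb : |∑ e ∈ crossEdges n, (fun _ => (1:ℝ)) e * ∏ i ∈ e, x i|
      ≤ ((crossEdges n).card : ℝ) := by
    calc |∑ e ∈ crossEdges n, (fun _ => (1:ℝ)) e * ∏ i ∈ e, x i|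
        ≤ ∑ e ∈ crossEdges n, |(fun _ => (1:ℝ)) e * ∏ i ∈ e, x i| :=
          Finset.abs_sum_le_sum_abs _ _
      _ ≤ ∑ _e ∈ crossEdges n, (1:ℝ) := by
          refine Finset.sum_le_sum fun e _ => ?_
          rw [one_mul, Finset.abs_prod]
          exact Finset.prod_le_one (fun i _ => abs_nonneg _) (fun i _ => habs i)
      _ = ((crossEdges n).card : ℝ) := by simp
  exact mul_le_mul_of_nonneg_left hb (by norm_num)

/-- Section 2 of the paper: for even `n ≥ 2`, the `4`-graph `G` of Section 2 is
`2`-chromatic (its vertex set can be partitioned into `2` sets neither of which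
contains an edge, but not into `1` such set), and for every real `p ≥ 2`,
`λ^(p)(G) > ((n-1)²/(8n)) · |λ_min^(p)(G)|`; hence the ratio
`λ^(p)(G)/|λ_min^(p)(G)|` grows with `n` and cannot be bounded above by a function
of the chromatic number and `p`. -/
theorem crossEdges_two_chromatic_ratio_unbounded (n : ℕ) (hn : Even n) (h2 : 2 ≤ n) :
    ((∃ f : Fin n ⊕ Fin n → Fin 2,
        ∀ e ∈ crossEdges n, ¬ ∀ u ∈ e, ∀ v ∈ e, f u = f v) ∧
      ¬ ∃ f : Fin n ⊕ Fin n → Fin 1,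
        ∀ e ∈ crossEdges n, ¬ ∀ u ∈ e, ∀ v ∈ e, f u = f v) ∧
    ∀ p : ℝ, 2 ≤ p →
      lamMax 4 p (crossEdges n) (fun _ => 1) >
        (((n : ℝ) - 1) ^ 2 / (8 * (n : ℝ))) *
          |lamMin 4 p (crossEdges n) (fun _ => 1)| := by
  constructor
  · constructor
    · refine ⟨Sum.elim (fun _ => 0) (fun _ => 1), ?_⟩
      intro e he hmono
      rw [mem_crossEdges_iff] at he
      obtain ⟨a, ha⟩ := Finset.card_pos.1 (by omega : 0 < e.toLeft.card)
      obtain ⟨b, hb⟩ := Finset.card_pos.1 (by omega : 0 < e.toRight.card)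
      have h1 := hmono (Sum.inl a) (Finset.mem_toLeft.1 ha) (Sum.inr b) (Finset.mem_toRight.1 hb)
      simp at h1
    · rintro ⟨f, hf⟩
      set a0 : Fin n := ⟨0, by omega⟩ with ha0d
      set a1 : Fin n := ⟨1, by omega⟩ with ha1d
      have hne : a0 ≠ a1 := by simp [ha0d, ha1d, Fin.ext_iff]
      have hcard : ({a0, a1} : Finset (Fin n)).card = 2 := Finset.card_pair hne
      set e0 : Finset (Fin n ⊕ Fin n) :=
        ({a0, a1} : Finset (Fin n)).disjSum ({a0, a1} : Finset (Fin n)) with he0d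
      have he0 : e0 ∈ crossEdges n := by
        rw [mem_crossEdges_iff, he0d, Finset.toLeft_disjSum, Finset.toRight_disjSum]
        exact ⟨hcard, hcard⟩
      exact hf e0 he0 (fun u _ v _ => Subsingleton.elim _ _)
  · intro p hp
    have hp0 : 0 < p := lt_of_lt_of_le two_pos hp
    have hn0 : (0:ℝ) < n := by exact_mod_cast (by omega : 0 < n)
    have hn1 : (1:ℝ) < n := by exact_mod_cast (by omega : 1 < n)
    set K := ((1:ℝ)/(2*(n:ℝ))) ^ ((4:ℝ)/p) with hKd
    have hKpos : 0 < K := Real.rpow_pos_of_pos (by positivity) _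
    set S : Set ℝ := {t | ∃ x : Fin n ⊕ Fin n → ℝ, lpNorm p x = 1 ∧
      polyForm 4 (crossEdges n) (fun _ => 1) x = t} with hSd
    have hmaxeq : lamMax 4 p (crossEdges n) (fun _ => 1) = sSup S := rfl
    have hmineq : lamMin 4 p (crossEdges n) (fun _ => 1) = sInf S := rfl
    have hzero : (0:ℝ) ∈ S := by
      obtain ⟨x, hx1, hx2⟩ := poly_zero h2 hp
      exact ⟨x, hx1, hx2⟩
    have hmem : (6 * (n:ℝ) ^ 2 * ((n:ℝ) - 1) ^ 2 * K) ∈ S := by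
      obtain ⟨x, hx1, hx2⟩ := poly_max h2 hp
      exact ⟨x, hx1, hx2⟩
    have hbddA : BddAbove S := ⟨24 * ((crossEdges n).card : ℝ), by
      rintro t ⟨x, hx1, rfl⟩
      exact (abs_le.1 (poly_bound hp hx1)).2⟩
    have hbddB : BddBelow S := ⟨-(24 * ((crossEdges n).card : ℝ)), by
      rintro t ⟨x, hx1, rfl⟩
      exact (abs_le.1 (poly_bound hp hx1)).1⟩
    have hmax : 6 * (n:ℝ) ^ 2 * ((n:ℝ) - 1) ^ 2 * K ≤ sSup S := le_csSup hbddA hmem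
    have hmin1 : sInf S ≤ 0 := csInf_le hbddB hzero
    have hmin2 : -(6 * (n:ℝ) ^ 3 * K) ≤ sInf S :=
      le_csInf ⟨0, hzero⟩ (by rintro t ⟨x, hx1, rfl⟩; exact poly_lower h2 hp hx1)
    rw [hmaxeq, hmineq]
    have habs : |sInf S| ≤ 6 * (n:ℝ) ^ 3 * K :=
      abs_le.2 ⟨hmin2, hmin1.trans (by positivity)⟩
    have hfin : (((n:ℝ) - 1) ^ 2 / (8 * (n:ℝ))) * (6 * (n:ℝ) ^ 3 * K)
        < 6 * (n:ℝ) ^ 2 * ((n:ℝ) - 1) ^ 2 * K := by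
      rw [div_mul_eq_mul_div, div_lt_iff₀ (by positivity)]
      nlinarith [mul_pos (mul_pos (pow_pos (show (0:ℝ) < (n:ℝ) - 1 by linarith) 2)
        (pow_pos hn0 3)) hKpos]
    calc (((n:ℝ) - 1) ^ 2 / (8 * (n:ℝ))) * |sInf S|
        ≤ (((n:ℝ) - 1) ^ 2 / (8 * (n:ℝ))) * (6 * (n:ℝ) ^ 3 * K) :=
          mul_le_mul_of_nonneg_left habs (by positivity)
      _ < 6 * (n:ℝ) ^ 2 * ((n:ℝ) - 1) ^ 2 * K := hfin
      _ ≤ sSup S := hmax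
end
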